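/- Quantitative Poincaré with weight: suppose Ψ ∈ H¹(Ω₁) is continuous with 0 < inf Ψ ≤ sup Ψ < ∞ and satisfies Q₁(φ,φ) ≥ (inf Ψ)² ‖∇(φ/Ψ)‖² for all φ ∈ H¹(Ω₁), where Ω₁ = [0,1]^{d-1} × [0,L]. Then, with K = sup Ψ / inf Ψ, for all φ ∈ H¹(Ω₁): (K²·2/L)‖Γφ‖²_{L²(S)} + (sup Ψ)² · (inf Ψ)^{-2} Q₁(φ,φ) ≥ (1/L²)‖φ‖²_{L²(Ω₁)}. In particular there is c₂ > 0 with (1/L)‖Γφ‖² + Q₁(φ,φ) ≥ (1/(c₂L²))‖φ‖². -/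

import Mathlib

open MeasureTheory Set intervalIntegral

/-- Squared Euclidean norm of the full gradient of `φ : ℝ^{d-1} × ℝ → ℝ`. -/
noncomputable def gradSq {n : ℕ} (φ : (Fin n → ℝ) × ℝ → ℝ) (p : (Fin n → ℝ) × ℝ) : ℝ :=
  (∑ i : Fin n, (fderiv ℝ φ p (Pi.single i 1, 0)) ^ 2) + (fderiv ℝ φ p (0, 1)) ^ 2

/-- Cauchy–Schwarz for interval integrals. -/
lemma cs1d (f : ℝ → ℝ) (t : ℝ) (ht : 0 ≤ t) (hf : ContinuousOn f (Icc 0 t)) :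
    (∫ s in (0:ℝ)..t, f s) ^ 2 ≤ t * ∫ s in (0:ℝ)..t, (f s) ^ 2 := by
  rcases eq_or_lt_of_le ht with rfl | ht'
  · simp
  have huIcc : Set.uIcc (0:ℝ) t = Icc 0 t := uIcc_of_le ht
  have hfi : IntervalIntegrable f volume 0 t := by
    apply ContinuousOn.intervalIntegrable; rwa [huIcc]
  have hfi2 : IntervalIntegrable (fun s => (f s) ^ 2) volume 0 t := by
    apply ContinuousOn.intervalIntegrable; rw [huIcc]; exact hf.pow 2
  set I := ∫ s in (0:ℝ)..t, f s with hI
  set J := ∫ s in (0:ℝ)..t, (f s) ^ 2 with hJ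
  set c : ℝ := I / t with hc
  have key : 0 ≤ ∫ s in (0:ℝ)..t, (f s - c) ^ 2 :=
    intervalIntegral.integral_nonneg ht (fun s _ => sq_nonneg _)
  have expand : (∫ s in (0:ℝ)..t, (f s - c) ^ 2)
      = J - 2 * c * I + c ^ 2 * t := by
    have : (fun s => (f s - c) ^ 2) = fun s => ((f s) ^ 2 - (2 * c) * f s + c ^ 2) := by
      funext s; ring
    rw [this, intervalIntegral.integral_add ((hfi2.sub (hfi.const_mul _)))
        intervalIntegrable_const,
      intervalIntegral.integral_sub hfi2 (hfi.const_mul _),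
      intervalIntegral.integral_const_mul, intervalIntegral.integral_const]
    simp [hI, hJ]; ring
  have htne : t ≠ 0 := ne_of_gt ht'
  have h1 : 0 ≤ J - I ^ 2 / t := by
    have e1 : 2 * c * I = 2 * (I ^ 2 / t) := by rw [hc]; field_simp
    have e2 : c ^ 2 * t = I ^ 2 / t := by rw [hc]; field_simp
    rw [expand, e1, e2] at key; linarith
  have := (div_le_iff₀ ht').mp (by linarith : I ^ 2 / t ≤ J)
  linarith [this]

/-- 1D trace–Poincaré inequality. -/
lemma trace1d (g g' : ℝ → ℝ) (L : ℝ) (hL : 0 < L)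
    (hderiv : ∀ t ∈ Icc (0:ℝ) L, HasDerivAt g (g' t) t)
    (hg' : ContinuousOn g' (Icc 0 L)) :
    ∫ t in (0:ℝ)..L, (g t) ^ 2 ≤ 2 * L * (g 0) ^ 2 + L ^ 2 * ∫ t in (0:ℝ)..L, (g' t) ^ 2 := by
  have huIcc : Set.uIcc (0:ℝ) L = Icc 0 L := uIcc_of_le hL.le
  have hgc : ContinuousOn g (Icc 0 L) := fun t ht => ((hderiv t ht).continuousAt).continuousWithinAt
  have hg'2i : IntervalIntegrable (fun t => (g' t) ^ 2) volume 0 L := by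
    apply ContinuousOn.intervalIntegrable; rw [huIcc]; exact hg'.pow 2
  set D := ∫ t in (0:ℝ)..L, (g' t) ^ 2 with hD
  have hD0 : 0 ≤ D := intervalIntegral.integral_nonneg hL.le (fun s _ => sq_nonneg _)
  have key : ∀ t ∈ Icc (0:ℝ) L, (g t) ^ 2 ≤ 2 * (g 0) ^ 2 + 2 * t * D := by
    intro t ht
    have hsub : Icc (0:ℝ) t ⊆ Icc 0 L := Icc_subset_Icc le_rfl ht.2
    have huIcct : Set.uIcc (0:ℝ) t = Icc 0 t := uIcc_of_le ht.1
    have hg'i : IntervalIntegrable g' volume 0 t := by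
      apply ContinuousOn.intervalIntegrable; rw [huIcct]; exact hg'.mono hsub
    have ftc : ∫ s in (0:ℝ)..t, g' s = g t - g 0 := by
      apply intervalIntegral.integral_eq_sub_of_hasDerivAt
      · intro s hs; exact hderiv s (hsub (by rwa [huIcct] at hs))
      · exact hg'i
    have cs : (∫ s in (0:ℝ)..t, g' s) ^ 2 ≤ t * ∫ s in (0:ℝ)..t, (g' s) ^ 2 :=
      cs1d g' t ht.1 (hg'.mono hsub)
    have mono : (∫ s in (0:ℝ)..t, (g' s) ^ 2) ≤ D := by
      apply intervalIntegral.integral_mono_interval le_rfl ht.1 ht.2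
      · filter_upwards with s using sq_nonneg _
      · exact hg'2i
    have h1 : (g t) ^ 2 ≤ 2 * (g 0) ^ 2 + 2 * (∫ s in (0:ℝ)..t, g' s) ^ 2 := by
      rw [ftc]; nlinarith [sq_nonneg (g t - 2 * g 0)]
    nlinarith [mul_le_mul_of_nonneg_left mono ht.1]
  have hgi2 : IntervalIntegrable (fun t => (g t) ^ 2) volume 0 L := by
    apply ContinuousOn.intervalIntegrable; rw [huIcc]; exact hgc.pow 2
  have hrhsi : IntervalIntegrable (fun t => 2 * (g 0) ^ 2 + 2 * t * D) volume 0 L :=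
    (Continuous.intervalIntegrable (by continuity) 0 L)
  calc ∫ t in (0:ℝ)..L, (g t) ^ 2
      ≤ ∫ t in (0:ℝ)..L, (2 * (g 0) ^ 2 + 2 * t * D) :=
        intervalIntegral.integral_mono_on hL.le hgi2 hrhsi key
    _ = 2 * L * (g 0) ^ 2 + L ^ 2 * D := by
        rw [intervalIntegral.integral_add intervalIntegrable_const
          (Continuous.intervalIntegrable (by continuity) 0 L)]
        have h2 : (∫ t in (0:ℝ)..L, 2 * t * D) = D * (L ^ 2 / 2) * 2 := by
          have : (fun t : ℝ => 2 * t * D) = fun t => (2 * D) * t := by funext t; ring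
          rw [this, intervalIntegral.integral_const_mul, integral_id]; ring
        rw [intervalIntegral.integral_const, h2]; simp; ring

lemma integrableOn_paramInt {n : ℕ} (G : (Fin n → ℝ) × ℝ → ℝ) (L R : ℝ) (hL : 0 ≤ L)
    (hmeas : StronglyMeasurable G)
    (hbound : ∀ p ∈ (Icc (0 : Fin n → ℝ) 1) ×ˢ (Icc (0:ℝ) L), |G p| ≤ R) :
    IntegrableOn (fun x' => ∫ t in (0:ℝ)..L, G (x', t)) (Icc 0 1) volume := by
  have hms : AEStronglyMeasurable (fun x' => ∫ t in (0:ℝ)..L, G (x', t)) volume := by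
    have heq : (fun x' => ∫ t in (0:ℝ)..L, G (x', t))
        = fun x' => ∫ t, G (x', t) ∂(volume.restrict (Ioc 0 L)) := by
      funext x'; rw [intervalIntegral.integral_of_le hL]
    rw [heq]
    exact (hmeas.integral_prod_right').aestronglyMeasurable
  apply Measure.integrableOn_of_bounded (M := R * |L - 0|)
  · exact (isCompact_Icc.measure_lt_top).ne
  · exact hms
  · apply ae_restrict_of_forall_mem measurableSet_Icc
    intro x' hx'
    apply intervalIntegral.norm_integral_le_of_norm_le_const
    intro t ht
    rw [Set.uIoc_of_le hL] at ht
    rw [Real.norm_eq_abs]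
    exact hbound (x', t) ⟨hx', Ioc_subset_Icc_self ht⟩

/-- Quantitative Poincaré inequality with a ground state weight on the strip
`Ω₁ = [0,1]^{d-1} × [0,L]`: if `0 < m ≤ Ψ ≤ M` on `Ω₁` and the form `Q₁` dominates
`m²‖∇(φ/Ψ)‖²`, then with `K = M/m`,
`(K²·2/L)‖Γφ‖² + (M²/m²)Q₁(φ,φ) ≥ (1/L²)‖φ‖²`, and in particular there is `c₂ > 0`
with `(1/L)‖Γφ‖² + Q₁(φ,φ) ≥ (1/(c₂L²))‖φ‖²`. -/
theorem weighted_trace_poincare {n : ℕ} (L : ℝ) (hL : 0 < L)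
    (Ψ : (Fin n → ℝ) × ℝ → ℝ) (Q₁ : ((Fin n → ℝ) × ℝ → ℝ) → ℝ)
    (m M : ℝ) (hm : 0 < m) (hΨ : ContDiff ℝ 1 Ψ)
    (hbounds : ∀ x' ∈ Set.Icc (0 : Fin n → ℝ) 1, ∀ t ∈ Set.Icc (0 : ℝ) L,
      m ≤ Ψ (x', t) ∧ Ψ (x', t) ≤ M)
    (hQ : ∀ φ : (Fin n → ℝ) × ℝ → ℝ, ContDiff ℝ 1 φ →
      m ^ 2 * (∫ x' in Set.Icc (0 : Fin n → ℝ) 1, ∫ t in (0 : ℝ)..L,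
          gradSq (fun p => φ p / Ψ p) (x', t)) ≤ Q₁ φ) :
    (∀ φ : (Fin n → ℝ) × ℝ → ℝ, ContDiff ℝ 1 φ →
      (1 / L ^ 2) * (∫ x' in Set.Icc (0 : Fin n → ℝ) 1, ∫ t in (0 : ℝ)..L, (φ (x', t)) ^ 2)
        ≤ ((M / m) ^ 2 * 2 / L) * (∫ x' in Set.Icc (0 : Fin n → ℝ) 1, (φ (x', 0)) ^ 2)
          + (M ^ 2 / m ^ 2) * Q₁ φ) ∧
    ∃ c₂ > (0 : ℝ), ∀ φ : (Fin n → ℝ) × ℝ → ℝ, ContDiff ℝ 1 φ →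
      (1 / (c₂ * L ^ 2)) *
          (∫ x' in Set.Icc (0 : Fin n → ℝ) 1, ∫ t in (0 : ℝ)..L, (φ (x', t)) ^ 2)
        ≤ (1 / L) * (∫ x' in Set.Icc (0 : Fin n → ℝ) 1, (φ (x', 0)) ^ 2) + Q₁ φ := by
  -- basic facts
  have h0x : (0 : Fin n → ℝ) ∈ Icc (0 : Fin n → ℝ) 1 := by
    constructor <;> intro i <;> norm_num
  have h0t : (0 : ℝ) ∈ Icc (0:ℝ) L := ⟨le_rfl, hL.le⟩
  have hmM : m ≤ M := le_trans (hbounds 0 h0x 0 h0t).1 (hbounds 0 h0x 0 h0t).2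
  have hM : 0 < M := lt_of_lt_of_le hm hmM
  have hUopen : IsOpen {p : (Fin n → ℝ) × ℝ | Ψ p ≠ 0} :=
    isOpen_compl_singleton.preimage hΨ.continuous
  have hBoxK : IsCompact ((Icc (0 : Fin n → ℝ) 1) ×ˢ (Icc (0:ℝ) L)) :=
    isCompact_Icc.prod isCompact_Icc
  have hBoxU : ((Icc (0 : Fin n → ℝ) 1) ×ˢ (Icc (0:ℝ) L)) ⊆ {p | Ψ p ≠ 0} := by
    rintro ⟨x', t⟩ ⟨hx', ht⟩
    exact ne_of_gt (lt_of_lt_of_le hm (hbounds x' hx' t ht).1)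
  -- Part 1
  have main : ∀ φ : (Fin n → ℝ) × ℝ → ℝ, ContDiff ℝ 1 φ →
      (1 / L ^ 2) * (∫ x' in Set.Icc (0 : Fin n → ℝ) 1, ∫ t in (0 : ℝ)..L, (φ (x', t)) ^ 2)
        ≤ ((M / m) ^ 2 * 2 / L) * (∫ x' in Set.Icc (0 : Fin n → ℝ) 1, (φ (x', 0)) ^ 2)
          + (M ^ 2 / m ^ 2) * Q₁ φ := by
    intro φ hφ
    set u : (Fin n → ℝ) × ℝ → ℝ := fun p => φ p / Ψ p with hu_def
    have huC : ContDiffOn ℝ 1 u {p | Ψ p ≠ 0} := fun p hp =>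
      ((hφ.contDiffAt.div hΨ.contDiffAt hp)).contDiffWithinAt
    have hufd : ContinuousOn (fun p => fderiv ℝ u p) {p | Ψ p ≠ 0} :=
      huC.continuousOn_fderiv_of_isOpen hUopen le_rfl
    have hgradc : ContinuousOn (gradSq u) {p | Ψ p ≠ 0} := by
      unfold gradSq
      apply ContinuousOn.add
      · exact continuousOn_finset_sum _ (fun i _ =>
          (hufd.clm_apply continuousOn_const).pow 2)
      · exact (hufd.clm_apply continuousOn_const).pow 2
    have hudiff : ∀ p ∈ {p : (Fin n → ℝ) × ℝ | Ψ p ≠ 0}, DifferentiableAt ℝ u p := fun p hp =>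
      (huC.contDiffAt (hUopen.mem_nhds hp)).differentiableAt one_ne_zero
    have hucont : ContinuousOn u {p | Ψ p ≠ 0} := huC.continuousOn
    -- gradSq dominates the t-derivative squared
    have hgrad_ge : ∀ p, (fderiv ℝ u p (0, 1)) ^ 2 ≤ gradSq u p := by
      intro p
      have : 0 ≤ ∑ i : Fin n, (fderiv ℝ u p (Pi.single i 1, 0)) ^ 2 :=
        Finset.sum_nonneg (fun i _ => sq_nonneg _)
      unfold gradSq; linarith
    -- pointwise in x'
    have perx : ∀ x' ∈ Icc (0 : Fin n → ℝ) 1,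
        (1 / L ^ 2) * (∫ t in (0:ℝ)..L, (φ (x', t)) ^ 2)
          ≤ ((M / m) ^ 2 * 2 / L) * (φ (x', 0)) ^ 2
            + M ^ 2 * ∫ t in (0:ℝ)..L, gradSq u (x', t) := by
      intro x' hx'
      have hmemU : ∀ t ∈ Icc (0:ℝ) L, ((x', t) : (Fin n → ℝ) × ℝ) ∈ {p | Ψ p ≠ 0} :=
        fun t ht => hBoxU ⟨hx', ht⟩
      have hcurve : Continuous (fun t : ℝ => ((x', t) : (Fin n → ℝ) × ℝ)) := continuous_const.prodMk continuous_id
      have hmap : MapsTo (fun t : ℝ => ((x', t) : (Fin n → ℝ) × ℝ)) (Icc 0 L) {p | Ψ p ≠ 0} :=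
        fun t ht => hmemU t ht
      have hder : ∀ t ∈ Icc (0:ℝ) L,
          HasDerivAt (fun s => u (x', s)) (fderiv ℝ u (x', t) (0, 1)) t := by
        intro t ht
        have h1 : HasFDerivAt u (fderiv ℝ u (x', t)) (x', t) :=
          (hudiff _ (hmemU t ht)).hasFDerivAt
        have h2 : HasDerivAt (fun s : ℝ => ((x', s) : (Fin n → ℝ) × ℝ))
            ((0 : Fin n → ℝ), (1:ℝ)) t := (hasDerivAt_const t x').prodMk (hasDerivAt_id t)
        exact h1.comp_hasDerivAt t h2
      have hg'c : ContinuousOn (fun t => fderiv ℝ u (x', t) (0, 1)) (Icc (0:ℝ) L) := by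
        exact ((hufd.comp hcurve.continuousOn hmap).clm_apply continuousOn_const)
      have tr := trace1d (fun s => u (x', s)) (fun t => fderiv ℝ u (x', t) (0, 1)) L hL
        hder hg'c
      have hucont' : ContinuousOn (fun t => u (x', t)) (Icc (0:ℝ) L) :=
        hucont.comp hcurve.continuousOn hmap
      have hgradc' : ContinuousOn (fun t => gradSq u (x', t)) (Icc (0:ℝ) L) :=
        hgradc.comp hcurve.continuousOn hmap
      have huIcc : Set.uIcc (0:ℝ) L = Icc 0 L := uIcc_of_le hL.le
      have hgrad_mono : (∫ t in (0:ℝ)..L, (fderiv ℝ u (x', t) (0, 1)) ^ 2)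
          ≤ ∫ t in (0:ℝ)..L, gradSq u (x', t) := by
        apply intervalIntegral.integral_mono_on hL.le
        · apply ContinuousOn.intervalIntegrable; rw [huIcc]; exact hg'c.pow 2
        · apply ContinuousOn.intervalIntegrable; rw [huIcc]; exact hgradc'
        · intro t _; exact hgrad_ge (x', t)
      have hphi_le : (∫ t in (0:ℝ)..L, (φ (x', t)) ^ 2)
          ≤ M ^ 2 * ∫ t in (0:ℝ)..L, (u (x', t)) ^ 2 := by
        rw [← intervalIntegral.integral_const_mul]
        apply intervalIntegral.integral_mono_on hL.le
        · apply ContinuousOn.intervalIntegrable; rw [huIcc]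
          exact ((hφ.continuous.comp hcurve).continuousOn).pow 2
        · apply ContinuousOn.intervalIntegrable; rw [huIcc]
          exact (hucont'.pow 2).const_smul (M ^ 2) |>.congr (fun t _ => by simp [smul_eq_mul])
        · intro t ht
          have hb := hbounds x' hx' t ht
          have hΨne : Ψ (x', t) ≠ 0 := hmemU t ht
          have hphi_eq : φ (x', t) = u (x', t) * Ψ (x', t) := by
            simp only [hu_def]; field_simp
          rw [hphi_eq]
          have h1 : (Ψ (x', t)) ^ 2 ≤ M ^ 2 := by nlinarith [hb.1, hb.2, hm]
          nlinarith [sq_nonneg (u (x', t))]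
      have hu0 : (u (x', 0)) ^ 2 ≤ (φ (x', 0)) ^ 2 / m ^ 2 := by
        have hb := hbounds x' hx' 0 h0t
        have hΨne : Ψ (x', 0) ≠ 0 := hmemU 0 h0t
        have : (u (x', 0)) ^ 2 = (φ (x', 0)) ^ 2 / (Ψ (x', 0)) ^ 2 := by
          simp only [hu_def]; rw [div_pow]
        rw [this]
        apply div_le_div_of_nonneg_left (sq_nonneg _) (by positivity)
        nlinarith [hb.1]
      -- combine
      set A := ∫ t in (0:ℝ)..L, (φ (x', t)) ^ 2 with hA_def
      set Iu := ∫ t in (0:ℝ)..L, (u (x', t)) ^ 2 with hIu_def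
      set g2 := ∫ t in (0:ℝ)..L, (fderiv ℝ u (x', t) (0, 1)) ^ 2 with hg2_def
      set Gx := ∫ t in (0:ℝ)..L, gradSq u (x', t) with hG_def
      set B := (φ (x', 0)) ^ 2 with hB_def
      have s1 : M ^ 2 * Iu ≤ M ^ 2 * (2 * L * (u (x', 0)) ^ 2 + L ^ 2 * g2) :=
        mul_le_mul_of_nonneg_left tr (sq_nonneg M)
      have s4 : M ^ 2 * (2 * L * (u (x', 0)) ^ 2 + L ^ 2 * g2)
          ≤ M ^ 2 * (2 * L * (B / m ^ 2) + L ^ 2 * Gx) := by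
        apply mul_le_mul_of_nonneg_left _ (sq_nonneg M)
        have t1 := mul_le_mul_of_nonneg_left hu0 (by positivity : (0:ℝ) ≤ 2 * L)
        have t2 := mul_le_mul_of_nonneg_left hgrad_mono (by positivity : (0:ℝ) ≤ L ^ 2)
        linarith
      have hA : A ≤ M ^ 2 * (2 * L * (B / m ^ 2) + L ^ 2 * Gx) :=
        le_trans hphi_le (le_trans s1 s4)
      have heq : (1 / L ^ 2) * (M ^ 2 * (2 * L * (B / m ^ 2) + L ^ 2 * Gx))
          = ((M / m) ^ 2 * 2 / L) * B + M ^ 2 * Gx := by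
        field_simp
      calc (1 / L ^ 2) * A ≤ (1 / L ^ 2) * (M ^ 2 * (2 * L * (B / m ^ 2) + L ^ 2 * Gx)) :=
            mul_le_mul_of_nonneg_left hA (by positivity)
        _ = ((M / m) ^ 2 * 2 / L) * B + M ^ 2 * Gx := heq
    -- integrability
    have hφc : Continuous φ := hφ.continuous
    obtain ⟨R₁, hR₁⟩ := hBoxK.exists_bound_of_continuousOn
      ((hφc.continuousOn (s := (Icc (0 : Fin n → ℝ) 1) ×ˢ (Icc (0:ℝ) L))).pow 2)
    obtain ⟨R₂, hR₂⟩ := hBoxK.exists_bound_of_continuousOn (hgradc.mono hBoxU)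
    have hintA : IntegrableOn (fun x' => ∫ t in (0:ℝ)..L, (φ (x', t)) ^ 2)
        (Icc (0 : Fin n → ℝ) 1) volume := by
      apply integrableOn_paramInt (fun p => (φ p) ^ 2) L R₁ hL.le
      · exact (hφc.pow 2).stronglyMeasurable
      · intro p hp; simpa [Real.norm_eq_abs] using hR₁ p hp
    have hgs_meas : Measurable (gradSq u) := by
      unfold gradSq
      apply Measurable.add
      · exact Finset.measurable_sum _ (fun i _ =>
          (measurable_fderiv_apply_const ℝ u _).pow_const 2)
      · exact (measurable_fderiv_apply_const ℝ u _).pow_const 2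
    have hintC : IntegrableOn (fun x' => ∫ t in (0:ℝ)..L, gradSq u (x', t))
        (Icc (0 : Fin n → ℝ) 1) volume := by
      apply integrableOn_paramInt (gradSq u) L R₂ hL.le
      · exact hgs_meas.stronglyMeasurable
      · intro p hp; simpa [Real.norm_eq_abs] using hR₂ p hp
    have hintB : IntegrableOn (fun x' => (φ (x', 0)) ^ 2) (Icc (0 : Fin n → ℝ) 1) volume := by
      apply ContinuousOn.integrableOn_compact isCompact_Icc
      exact (((hφc.comp (continuous_id.prodMk continuous_const : Continuous (fun x' : Fin n → ℝ => ((x', (0:ℝ))))))).pow 2).continuousOn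
    -- integrate the pointwise inequality
    have hmono : (∫ x' in Icc (0 : Fin n → ℝ) 1, (1 / L ^ 2) * ∫ t in (0:ℝ)..L, (φ (x', t)) ^ 2)
        ≤ ∫ x' in Icc (0 : Fin n → ℝ) 1,
            (((M / m) ^ 2 * 2 / L) * (φ (x', 0)) ^ 2
              + M ^ 2 * ∫ t in (0:ℝ)..L, gradSq u (x', t)) := by
      apply setIntegral_mono_on
      · exact hintA.const_mul _
      · exact (hintB.const_mul _).add (hintC.const_mul _)
      · exact measurableSet_Icc
      · exact perx
    rw [MeasureTheory.integral_const_mul] at hmono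
    rw [integral_add (hintB.const_mul _) (hintC.const_mul _),
      MeasureTheory.integral_const_mul, MeasureTheory.integral_const_mul] at hmono
    -- replace the gradient term by Q₁
    have hq := hQ φ hφ
    have hCine : M ^ 2 * (∫ x' in Icc (0 : Fin n → ℝ) 1, ∫ t in (0:ℝ)..L, gradSq u (x', t))
        ≤ (M ^ 2 / m ^ 2) * Q₁ φ := by
      have hfac : M ^ 2 = (M ^ 2 / m ^ 2) * m ^ 2 := by field_simp
      have hcnn : (0:ℝ) ≤ M ^ 2 / m ^ 2 := by positivity
      calc M ^ 2 * (∫ x' in Icc (0 : Fin n → ℝ) 1, ∫ t in (0:ℝ)..L, gradSq u (x', t))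
          = (M ^ 2 / m ^ 2) * (m ^ 2 * ∫ x' in Icc (0 : Fin n → ℝ) 1,
              ∫ t in (0:ℝ)..L, gradSq u (x', t)) := by rw [← mul_assoc, ← hfac]
        _ ≤ (M ^ 2 / m ^ 2) * Q₁ φ := mul_le_mul_of_nonneg_left hq hcnn
    linarith
  refine ⟨main, ?_⟩
  -- Part 2
  refine ⟨2 * (M / m) ^ 2, by positivity, ?_⟩
  intro φ hφ
  have h1 := main φ hφ
  set X := ∫ x' in Icc (0 : Fin n → ℝ) 1, ∫ t in (0:ℝ)..L, (φ (x', t)) ^ 2 with hX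
  set S := ∫ x' in Icc (0 : Fin n → ℝ) 1, (φ (x', 0)) ^ 2 with hS
  have hS0 : 0 ≤ S := setIntegral_nonneg measurableSet_Icc (fun x' _ => sq_nonneg _)
  have hQ0 : 0 ≤ Q₁ φ := by
    refine le_trans ?_ (hQ φ hφ)
    apply mul_nonneg (sq_nonneg m)
    apply setIntegral_nonneg measurableSet_Icc
    intro x' _
    apply intervalIntegral.integral_nonneg hL.le
    intro t _
    unfold gradSq
    positivity
  have hK2 : (0:ℝ) < (M / m) ^ 2 := by positivity
  have hMm : M ^ 2 / m ^ 2 = (M / m) ^ 2 := by rw [div_pow]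
  rw [hMm] at h1
  have h2 : (1 / (2 * (M / m) ^ 2 * L ^ 2)) * X
      = (1 / (2 * (M / m) ^ 2)) * ((1 / L ^ 2) * X) := by ring
  rw [h2]
  have h3 : (1 / (2 * (M / m) ^ 2)) * ((1 / L ^ 2) * X)
      ≤ (1 / (2 * (M / m) ^ 2)) * (((M / m) ^ 2 * 2 / L) * S + (M / m) ^ 2 * Q₁ φ) :=
    mul_le_mul_of_nonneg_left h1 (by positivity)
  have h4 : (1 / (2 * (M / m) ^ 2)) * (((M / m) ^ 2 * 2 / L) * S + (M / m) ^ 2 * Q₁ φ)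
      = (1 / L) * S + Q₁ φ / 2 := by
    field_simp
  rw [h4] at h3
  linarith
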